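/- Let d be an odd positive integer and a, b positive real numbers with a + b = d. Set λ₀ = √a + i√b and τ₀ = (λ₀² − d²)/(4d²), which lies in the upper half-plane. Then for all z ∈ ℂ: θ(d·λ̄₀·z, −d²·τ̄₀) = (λ₀/d) · e^{4iπ d² z²} · θ(λ₀ z, τ₀), where λ̄₀ and τ̄₀ denote complex conjugates (note −d²τ̄₀ lies in the upper half-plane). -/

import Mathlib

open Complex Real

noncomputable def theta (z τ : ℂ) : ℂ :=
  ∑' m : ℤ, Complex.exp ((Real.pi : ℂ) * Complex.I * (m : ℂ) ^ 2 * τ) *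
    Complex.exp (2 * (Real.pi : ℂ) * Complex.I * (m : ℂ) * z)

lemma theta_eq (z τ : ℂ) : theta z τ = jacobiTheta₂ z τ := by
  refine tsum_congr fun m => ?_
  rw [jacobiTheta₂_term, ← Complex.exp_add]
  congr 1
  ring

lemma jacobiTheta₂_add_two_int (z τ : ℂ) (n : ℤ) :
    jacobiTheta₂ z (τ + 2 * n) = jacobiTheta₂ z τ := by
  rw [jacobiTheta₂, jacobiTheta₂]
  refine tsum_congr fun m => ?_
  rw [jacobiTheta₂_term, jacobiTheta₂_term]
  have h : 2 * ↑π * I * (m:ℂ) * z + ↑π * I * (m:ℂ) ^ 2 * (τ + 2 * n) =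
      (2 * ↑π * I * (m:ℂ) * z + ↑π * I * (m:ℂ) ^ 2 * τ) + ((m^2*n : ℤ) : ℂ) * (2 * ↑π * I) := by
    push_cast; ring
  rw [h, Complex.exp_add, Complex.exp_int_mul_two_pi_mul_I, mul_one]

lemma cpow_half_mul {x y : ℂ} (hx : 0 < x.re) (hy : 0 < y.re) :
    (x * y) ^ (1/2 : ℂ) = x ^ (1/2:ℂ) * y ^ (1/2:ℂ) := by
  have hx0 : x ≠ 0 := fun h => by simp [h] at hx
  have hy0 : y ≠ 0 := fun h => by simp [h] at hy
  have harg : arg x + arg y ∈ Set.Ioc (-π) π := by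
    have h1 : |arg x| < π / 2 := abs_arg_lt_pi_div_two_iff.mpr (Or.inl hx)
    have h2 : |arg y| < π / 2 := abs_arg_lt_pi_div_two_iff.mpr (Or.inl hy)
    rw [abs_lt] at h1 h2
    constructor <;> [linarith; linarith]
  rw [cpow_def_of_ne_zero (mul_ne_zero hx0 hy0), cpow_def_of_ne_zero hx0,
    cpow_def_of_ne_zero hy0, Complex.log_mul hx0 hy0 harg, add_mul, Complex.exp_add]

lemma sq_cpow_half {w : ℂ} (hw : 0 < w.re) : (w^2) ^ (1/2:ℂ) = w := by
  have hw0 : w ≠ 0 := fun h => by simp [h] at hw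
  rw [sq, cpow_half_mul hw hw, ← Complex.cpow_add _ _ hw0]
  norm_num

/-- Corollary 2.7: with `λ₀ = √a + i√b` and `τ₀ = (λ₀² − d²)/(4d²)`, one has
`θ(dλ̄₀z, −d²τ̄₀) = (λ₀/d) e^{4iπd²z²} θ(λ₀z, τ₀)` for all `z ∈ ℂ`. -/
theorem theta_conjugate_transformation (d : ℕ) (hd : Odd d) (hd0 : 0 < d)
    (a b : ℝ) (ha : 0 < a) (hb : 0 < b) (hab : a + b = d)
    (l0 t0 : ℂ)
    (hl0 : l0 = (Real.sqrt a : ℂ) + Complex.I * Real.sqrt b)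
    (ht0 : t0 = (l0 ^ 2 - (d : ℂ) ^ 2) / (4 * (d : ℂ) ^ 2))
    (z : ℂ) :
    theta ((d : ℂ) * (starRingEnd ℂ) l0 * z) (-(d : ℂ) ^ 2 * (starRingEnd ℂ) t0) =
      l0 / d * Complex.exp (4 * (Real.pi : ℂ) * Complex.I * (d : ℂ) ^ 2 * z ^ 2) *
        theta (l0 * z) t0 := by
  -- basic nonvanishing facts
  have hdR : (0:ℝ) < d := Nat.cast_pos.mpr hd0
  have hdC : (d:ℂ) ≠ 0 := Nat.cast_ne_zero.mpr hd0.ne'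
  have hsa : 0 < Real.sqrt a := Real.sqrt_pos.mpr ha
  have hsb : 0 < Real.sqrt b := Real.sqrt_pos.mpr hb
  have hl0re : l0.re = Real.sqrt a := by rw [hl0]; simp
  have hl0im : l0.im = Real.sqrt b := by rw [hl0]; simp
  have hl0ne : l0 ≠ 0 := by
    intro h
    rw [h] at hl0re
    simp at hl0re
    linarith
  -- |l0|² = d
  have hnorm : l0 * (starRingEnd ℂ) l0 = (d:ℂ) := by
    have h1 : (Real.sqrt a : ℂ)^2 = (a:ℂ) := by
      rw [← Complex.ofReal_pow, Real.sq_sqrt ha.le]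
    have h2 : (Real.sqrt b : ℂ)^2 = (b:ℂ) := by
      rw [← Complex.ofReal_pow, Real.sq_sqrt hb.le]
    rw [hl0]
    simp only [map_add, map_mul, Complex.conj_I, Complex.conj_ofReal]
    have : ((Real.sqrt a:ℂ) + Complex.I * Real.sqrt b) *
        ((Real.sqrt a:ℂ) + -Complex.I * Real.sqrt b)
        = (Real.sqrt a:ℂ)^2 - Complex.I^2 * (Real.sqrt b:ℂ)^2 := by ring
    rw [this, Complex.I_sq, h1, h2]
    rw [show ((a:ℂ) - -1 * b) = ((a + b : ℝ) : ℂ) by push_cast; ring, hab]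
    push_cast
    ring
  have hconj : (starRingEnd ℂ) l0 = (d:ℂ) / l0 := by
    rw [eq_div_iff hl0ne, mul_comm]
    exact hnorm
  -- imaginary parts
  have hcast : ((d:ℂ)^2) = (((d:ℝ)^2 : ℝ):ℂ) := by push_cast; ring
  have hdim : ((d:ℂ)^2).im = 0 := by rw [hcast]; exact Complex.ofReal_im _
  have hdre : ((d:ℂ)^2).re = (d:ℝ)^2 := by rw [hcast]; exact Complex.ofReal_re _
  have hσim : 0 < (l0^2).im := by
    rw [sq, Complex.mul_im, hl0re, hl0im]
    positivity
  have hσd : l0^2 - (d:ℂ)^2 ≠ 0 := by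
    intro h
    have := congrArg Complex.im h
    simp [hdim] at this
    linarith
  have hdσ : (d:ℂ)^2 - l0^2 ≠ 0 := by
    intro h
    exact hσd (by linear_combination -h)
  have hσne : l0^2 ≠ 0 := pow_ne_zero 2 hl0ne
  have ht0im : 0 < t0.im := by
    rw [ht0, show (4 * (d:ℂ)^2) = (((4 * d^2 : ℝ)):ℂ) by push_cast; ring]
    rw [Complex.div_ofReal_im]
    have : (l0^2 - (d:ℂ)^2).im = (l0^2).im := by simp [hdim]
    rw [this]
    positivity
  have ht0ne : t0 ≠ 0 := by
    intro h
    rw [h] at ht0im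
    simp at ht0im
  -- define t2
  set t2 : ℂ := 4*l0^2/((d:ℂ)^2 - l0^2) with ht2
  have ht2ne : t2 ≠ 0 := div_ne_zero (by simpa using hσne) hdσ
  have ht2im : 0 < t2.im := by
    rw [ht2, Complex.div_im]
    have hre : ((d:ℂ)^2 - l0^2).re = (d:ℝ)^2 - (l0^2).re := by simp [hdre]
    have him : ((d:ℂ)^2 - l0^2).im = -(l0^2).im := by simp [hdim]
    have h4re : ((4:ℂ)*l0^2).re = 4 * (l0^2).re := by simp
    have h4im : ((4:ℂ)*l0^2).im = 4 * (l0^2).im := by simp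
    rw [hre, him, h4re, h4im]
    have hns : 0 < Complex.normSq ((d:ℂ)^2 - l0^2) := by
      rw [Complex.normSq_pos]; exact hdσ
    have hnum : 4 * (l0 ^ 2).im * ((d:ℝ) ^ 2 - (l0 ^ 2).re) - 4 * (l0 ^ 2).re * -(l0 ^ 2).im
        = 4 * (d:ℝ)^2 * (l0^2).im := by ring
    rw [div_sub_div_same, hnum]
    exact div_pos (by positivity) hns
  -- arithmetic: d² = 8s + 1
  obtain ⟨r, hr⟩ := hd
  obtain ⟨s, hs⟩ := Nat.even_mul_succ_self r
  have hnat : d ^ 2 = 8 * s + 1 := by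
    have h1 : d ^ 2 = 4 * (r * (r + 1)) + 1 := by rw [hr]; ring
    rw [h1, hs]; ring
  have hsC : (d:ℂ)^2 = 8 * (s:ℂ) + 1 := by
    have h2 := congrArg (Nat.cast : ℕ → ℂ) hnat
    push_cast at h2
    exact h2
  -- key identities
  have hw : l0 * z / t0 = -((d:ℂ) * (starRingEnd ℂ) l0 * z * t2) := by
    rw [ht0, hconj, ht2]
    field_simp
    ring
  have e1 : -1/t0 = t2 + 2 * (((2:ℤ)):ℂ) := by
    rw [ht0, ht2]
    field_simp
    ring
  have e0 : -(d:ℂ)^2 * (starRingEnd ℂ) t0 = -1/t2 + 2 * (((s:ℤ)):ℂ) := by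
    have hconjt0 : (starRingEnd ℂ) t0 = ((d:ℂ)^2/l0^2 - (d:ℂ)^2)/(4*(d:ℂ)^2) := by
      simp only [ht0, map_div₀, map_sub, map_pow, map_mul, map_ofNat, Complex.conj_natCast,
        hconj, div_pow]
    rw [hconjt0, ht2]
    field_simp
    linear_combination l0^2 * hsC
  -- functional equations
  have hFE0 := jacobiTheta₂_functional_equation (l0 * z) t0
  have hFE2 := jacobiTheta₂_functional_equation ((d:ℂ) * (starRingEnd ℂ) l0 * z * t2) t2
  have hwdiv : (d:ℂ) * (starRingEnd ℂ) l0 * z * t2 / t2 = (d:ℂ) * (starRingEnd ℂ) l0 * z :=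
    mul_div_cancel_right₀ _ ht2ne
  have hL : theta ((d:ℂ) * (starRingEnd ℂ) l0 * z) (-(d:ℂ)^2 * (starRingEnd ℂ) t0)
      = jacobiTheta₂ ((d:ℂ) * (starRingEnd ℂ) l0 * z) (-1/t2) := by
    rw [theta_eq, e0]
    exact jacobiTheta₂_add_two_int _ _ _
  have hRHS : theta (l0*z) t0 =
      1 / (-I*t0)^(1/2:ℂ) * cexp (-↑π*I*(l0*z)^2/t0) *
      (1 / (-I*t2)^(1/2:ℂ) * cexp (-↑π*I*((d:ℂ)*(starRingEnd ℂ) l0*z*t2)^2/t2) *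
        jacobiTheta₂ ((d:ℂ)*(starRingEnd ℂ) l0*z) (-1/t2)) := by
    rw [theta_eq, hFE0, hw, jacobiTheta₂_neg_left, e1, jacobiTheta₂_add_two_int, hFE2, hwdiv]
  -- the square-root prefactor
  have hP0repos : 0 < (-I*t0).re := by
    have : (-I*t0).re = t0.im := by simp
    rw [this]; exact ht0im
  have hP2repos : 0 < (-I*t2).re := by
    have : (-I*t2).re = t2.im := by simp
    rw [this]; exact ht2im
  have hldre : 0 < (l0/(d:ℂ)).re := by
    rw [show ((d:ℕ):ℂ) = ((d:ℝ):ℂ) from by push_cast; ring, Complex.div_ofReal_re, hl0re]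
    positivity
  have hldne : l0/(d:ℂ) ≠ 0 := div_ne_zero hl0ne hdC
  have hprod : (-I*t0) * (-I*t2) = (l0/(d:ℂ))^2 := by
    have hI : (-I*t0) * (-I*t2) = -(t0*t2) := by
      linear_combination (t0*t2) * Complex.I_sq
    rw [hI, ht0, ht2, div_pow]
    field_simp
    ring
  have hA : (-I*t0)^(1/2:ℂ) * (-I*t2)^(1/2:ℂ) = l0/(d:ℂ) := by
    rw [← cpow_half_mul hP0repos hP2repos, hprod, sq_cpow_half hldre]
  -- the exponential prefactor
  have hexp : 4*(↑π:ℂ)*I*(d:ℂ)^2*z^2 + (-↑π*I*(l0*z)^2/t0) +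
      (-↑π*I*((d:ℂ)*(starRingEnd ℂ) l0*z*t2)^2/t2) = 0 := by
    rw [ht0, ht2, hconj]
    field_simp
    ring
  have hP0ne : (-I*t0)^(1/2:ℂ) ≠ 0 := by
    rw [cpow_def_of_ne_zero (fun h => by simp [h] at hP0repos)]
    exact Complex.exp_ne_zero _
  have hP2ne : (-I*t2)^(1/2:ℂ) ≠ 0 := by
    rw [cpow_def_of_ne_zero (fun h => by simp [h] at hP2repos)]
    exact Complex.exp_ne_zero _
  have hkey : l0 / (d:ℂ) * cexp (4*(↑π:ℂ)*I*(d:ℂ)^2*z^2) *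
      (1 / (-I*t0)^(1/2:ℂ) * cexp (-↑π*I*(l0*z)^2/t0)) *
      (1 / (-I*t2)^(1/2:ℂ) * cexp (-↑π*I*((d:ℂ)*(starRingEnd ℂ) l0*z*t2)^2/t2)) = 1 := by
    calc l0 / (d:ℂ) * cexp (4*(↑π:ℂ)*I*(d:ℂ)^2*z^2) *
        (1 / (-I*t0)^(1/2:ℂ) * cexp (-↑π*I*(l0*z)^2/t0)) *
        (1 / (-I*t2)^(1/2:ℂ) * cexp (-↑π*I*((d:ℂ)*(starRingEnd ℂ) l0*z*t2)^2/t2))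
        = l0 / (d:ℂ) / ((-I*t0)^(1/2:ℂ) * (-I*t2)^(1/2:ℂ)) *
          cexp (4*(↑π:ℂ)*I*(d:ℂ)^2*z^2 + (-↑π*I*(l0*z)^2/t0) +
            (-↑π*I*((d:ℂ)*(starRingEnd ℂ) l0*z*t2)^2/t2)) := by
          rw [Complex.exp_add, Complex.exp_add]; ring
      _ = l0 / (d:ℂ) / (l0/(d:ℂ)) * cexp 0 := by rw [hA, hexp]
      _ = 1 := by rw [Complex.exp_zero, mul_one, div_self hldne]
  rw [hL, hRHS]
  linear_combination (-(jacobiTheta₂ ((d:ℂ)*(starRingEnd ℂ) l0*z) (-1/t2))) * hkey
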